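/- arXiv:1808.03130 — 2 statements merged into one kernel-verified Lean document; each statement's English description precedes it below -/
import Mathlib

section
/- In a rooted forest with p pairwise non-isomorphic subtrees in which some fixed relation r strictly descends, if a descending r-path visited more than p nodes then two visited nodes would root isomorphic subtrees, yielding an infinite simple r-path; hence, if the forest contains no infinite simple r-path, every descending r-path visits at most p nodes. -/
/-- In a rooted forest whose subtrees fall into at most `p` isomorphism classes
(recorded by `cls : V → Fin p`), equipped with a relation `r` that strictly descends
(witnessed by a depth function), suppose that whenever two nodes root isomorphic
subtrees and one is strictly deeper than the other, there is an embedding of the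
shallower subtree into the deeper one that maps the one node to the other, preserves
`r`, and shifts depths accordingly.  If a descending `r`-path visited more than `p`
nodes then two visited nodes would root isomorphic subtrees, yielding an infinite
simple `r`-path; hence, if the forest contains no infinite simple `r`-path, every
descending `r`-path visits at most `p` nodes. -/
theorem descending_path_bound {V : Type*} (r : V → V → Prop) (p : ℕ)
    (depth : V → ℕ) (cls : V → Fin p)
    (hdesc : ∀ x y, r x y → depth x < depth y)
    (hiso : ∀ u v, cls u = cls v → depth u < depth v →
      ∃ φ : V → V, φ u = v ∧ (∀ x y, r x y → r (φ x) (φ y)) ∧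
        (∀ x, depth (φ x) = depth x + (depth v - depth u)))
    (hnoinf : ¬ ∃ f : ℕ → V, (∀ i, r (f i) (f (i + 1))) ∧ Function.Injective f) :
    ∀ l : List V, List.Chain' r l → l.length ≤ p := by
  intro l hl
  by_contra hlen
  push_neg at hlen
  -- pigeonhole: two indices with the same class
  obtain ⟨a, b, hab, hcls⟩ : ∃ a b : Fin l.length, a < b ∧ cls (l.get a) = cls (l.get b) := by
    obtain ⟨a, b, hne, heq⟩ := Fintype.exists_ne_map_eq_of_card_lt
      (fun i : Fin l.length => cls (l.get i)) (by simpa using hlen)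
    rcases lt_or_gt_of_ne hne with h | h
    · exact ⟨a, b, h, heq⟩
    · exact ⟨b, a, h, heq.symm⟩
  -- depth strictly increases along the list
  have hdl : List.Chain' (fun x y => depth x < depth y) l := List.IsChain.imp hdesc hl
  have : IsTrans V (fun x y => depth x < depth y) := ⟨fun _ _ _ h1 h2 => h1.trans h2⟩
  have hpw : List.Pairwise (fun x y => depth x < depth y) l :=
    List.isChain_iff_pairwise.mp hdl
  have hdepth : depth (l.get a) < depth (l.get b) :=
    (List.pairwise_iff_get.mp hpw) a b hab
  obtain ⟨φ, hφu, hφr, -⟩ := hiso (l.get a) (l.get b) hcls hdepth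
  have hiter : ∀ q x y, r x y → r (φ^[q] x) (φ^[q] y) := by
    intro q
    induction q with
    | zero => intro x y h; simpa using h
    | succ q ih =>
      intro x y h
      simpa [Function.iterate_succ_apply'] using hφr _ _ (ih x y h)
  have hstep : ∀ i (h : i < l.length - 1),
      r (l.get ⟨i, by omega⟩) (l.get ⟨i + 1, by omega⟩) := fun i h => List.isChain_iff_getElem.mp hl i (by omega)
  set k := b.val - a.val with hkdef
  have hk : 0 < k := by omega
  have hblt : b.val < l.length := b.isLt
  have hgood : ∀ n : ℕ, a.val + n % k < l.length := by
    intro n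
    have := Nat.mod_lt n hk
    omega
  set f : ℕ → V := fun n => φ^[n / k] (l.get ⟨a.val + n % k, hgood n⟩) with hfdef
  have hrf : ∀ n, r (f n) (f (n + 1)) := by
    intro n
    have hmod : n % k < k := Nat.mod_lt n hk
    have hdm := Nat.div_add_mod n k
    by_cases hs : n % k + 1 < k
    · -- inside a block
      have h : n + 1 = (n % k + 1) + k * (n / k) := by omega
      have hm : (n + 1) % k = n % k + 1 := by
        rw [h, Nat.add_mul_mod_self_left, Nat.mod_eq_of_lt hs]
      have hd : (n + 1) / k = n / k := by
        rw [h, Nat.add_mul_div_left _ _ hk, Nat.div_eq_of_lt hs, Nat.zero_add]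
      have hr0 : r (l.get ⟨a.val + n % k, hgood n⟩)
          (l.get ⟨a.val + n % k + 1, by have := hgood (n+1); omega⟩) := by
        have := hstep (a.val + n % k) (by omega)
        convert this using 2
      have := hiter (n / k) _ _ hr0
      show r (φ^[n / k] (l.get ⟨a.val + n % k, hgood n⟩))
        (φ^[(n+1) / k] (l.get ⟨a.val + (n+1) % k, hgood (n+1)⟩))
      rw [hd]
      have hfin : (⟨a.val + (n+1) % k, hgood (n+1)⟩ : Fin l.length)
          = ⟨a.val + n % k + 1, by have := hgood (n+1); omega⟩ := Fin.ext (by simp [hm]; omega)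
      rw [hfin]
      exact this
    · -- block boundary
      have hs' : n % k + 1 = k := by omega
      have h1 : n + 1 = k * (n / k + 1) := by
        rw [Nat.mul_add, Nat.mul_one]; linarith [Nat.div_add_mod n k]
      have hd : (n + 1) / k = n / k + 1 := by
        rw [h1, Nat.mul_div_cancel_left _ hk]
      have hm : (n + 1) % k = 0 := by rw [h1]; exact Nat.mul_mod_right _ _
      have hr0 : r (l.get ⟨b.val - 1, by omega⟩) (l.get b) := by
        have h := hstep (b.val - 1) (by omega)
        have hbeq : (⟨b.val - 1 + 1, by omega⟩ : Fin l.length) = b := Fin.ext (by simp; omega)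
        convert h using 2
        exact hbeq.symm
      have hgb : (⟨a.val + n % k, hgood n⟩ : Fin l.length) = ⟨b.val - 1, by omega⟩ :=
        Fin.ext (by simp; omega)
      have := hiter (n / k) _ _ hr0
      show r (φ^[n / k] (l.get ⟨a.val + n % k, hgood n⟩))
        (φ^[(n+1) / k] (l.get ⟨a.val + (n+1) % k, hgood (n+1)⟩))
      rw [hd, hgb]
      have hga : (⟨a.val + (n+1) % k, hgood (n+1)⟩ : Fin l.length) = a :=
        Fin.ext (by simp [hm])
      rw [hga, Function.iterate_succ_apply, hφu]
      exact this
  have hmono : StrictMono (fun n => depth (f n)) :=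
    strictMono_nat_of_lt_succ (fun n => hdesc _ _ (hrf n))
  exact hnoinf ⟨f, hrf, fun m n h => hmono.injective (congrArg depth h)⟩
end

section
/- If a forest automaton with Büchi acceptance accepts some forest, then it accepts a regular forest, i.e., one with finitely many non-isomorphic subtrees. -/
open scoped Classical

/-- A forest (presented as a tree of addresses over `Fin N`, with a virtual root `[]`)
of branching at most `N`, with node labels in `Sg` and edge labels in `Γ`
(the edge label of a node is the label of the edge from its parent). -/
structure LForest (N : ℕ) (Sg Γ : Type) where
  dom : Set (List (Fin N))
  root_mem : [] ∈ dom
  prefixClosed : ∀ (l : List (Fin N)) (i : Fin N), l ++ [i] ∈ dom → l ∈ dom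
  nlabel : List (Fin N) → Sg
  elabel : List (Fin N) → Γ

/-- A top-down forest automaton with Büchi acceptance: states `Q`, a transition
relation `δ` relating the state and label of a node to the edge labels and states of
its (possibly absent) children, and a set `final` of marked states. -/
structure ForestAutomaton (N : ℕ) (Sg Γ Q : Type) where
  δ : Q → Sg → (Fin N → Option (Γ × Q)) → Prop
  init : Set Q
  final : Set Q

/-- `ρ` is a run of the automaton `A` on the forest `F`. -/
def IsRun {N : ℕ} {Sg Γ Q : Type} (A : ForestAutomaton N Sg Γ Q)
    (F : LForest N Sg Γ) (ρ : List (Fin N) → Q) : Prop :=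
  ρ [] ∈ A.init ∧
  ∀ l ∈ F.dom, A.δ (ρ l) (F.nlabel l)
    (fun i => if l ++ [i] ∈ F.dom then some (F.elabel (l ++ [i]), ρ (l ++ [i])) else none)

/-- The address of the `n`-th node on the infinite branch `b`. -/
def branchPrefix {N : ℕ} (b : ℕ → Fin N) (n : ℕ) : List (Fin N) :=
  (List.range n).map b

/-- The run `ρ` is accepting (Büchi): on every infinite branch of the forest, marked
states occur infinitely often. -/
def IsAccepting {N : ℕ} {Sg Γ Q : Type} (A : ForestAutomaton N Sg Γ Q)
    (F : LForest N Sg Γ) (ρ : List (Fin N) → Q) : Prop :=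
  ∀ b : ℕ → Fin N, (∀ n : ℕ, branchPrefix b n ∈ F.dom) →
    ∀ n : ℕ, ∃ m : ℕ, n ≤ m ∧ ρ (branchPrefix b m) ∈ A.final

/-- The automaton `A` accepts the forest `F`. -/
def Accepts {N : ℕ} {Sg Γ Q : Type} (A : ForestAutomaton N Sg Γ Q)
    (F : LForest N Sg Γ) : Prop :=
  ∃ ρ : List (Fin N) → Q, IsRun A F ρ ∧ IsAccepting A F ρ

/-- The subtree of the forest `F` rooted at the node `l`. -/
def subtreeAt {N : ℕ} {Sg Γ : Type} (F : LForest N Sg Γ) (l : List (Fin N))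
    (hl : l ∈ F.dom) : LForest N Sg Γ where
  dom := {l' | l ++ l' ∈ F.dom}
  root_mem := by simpa using hl
  prefixClosed := by
    intro l' i h
    have := F.prefixClosed (l ++ l') i (by simpa [List.append_assoc] using h)
    simpa using this
  nlabel := fun l' => F.nlabel (l ++ l')
  elabel := fun l' => F.elabel (l ++ l')

/-- A forest is regular if it has only finitely many distinct subtrees. -/
def Regular {N : ℕ} {Sg Γ : Type} (F : LForest N Sg Γ) : Prop :=
  {S : LForest N Sg Γ | ∃ (l : List (Fin N)) (hl : l ∈ F.dom), S = subtreeAt F l hl}.Finite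

/-! ### Auxiliary development -/

namespace BRF

lemma branchPrefix_succ {N : ℕ} (b : ℕ → Fin N) (n : ℕ) :
    branchPrefix b (n+1) = branchPrefix b n ++ [b n] := by
  simp [branchPrefix, List.range_succ]

lemma branchPrefix_length {N : ℕ} (b : ℕ → Fin N) (n : ℕ) :
    (branchPrefix b n).length = n := by simp [branchPrefix]

variable {N : ℕ} {Sg Γ Q : Type}

lemma dom_of_append (F : LForest N Sg Γ) (l w : List (Fin N)) (h : l ++ w ∈ F.dom) :
    l ∈ F.dom := by
  induction w using List.reverseRecOn with
  | nil => simpa using h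
  | append_singleton w i ih =>
    exact ih (F.prefixClosed (l ++ w) i (by simpa [List.append_assoc] using h))

lemma dom_of_prefix (F : LForest N Sg Γ) {l w : List (Fin N)} (h : l <+: w)
    (hw : w ∈ F.dom) : l ∈ F.dom := by
  obtain ⟨t, rfl⟩ := h
  exact dom_of_append F l t hw

/-! #### König's lemma for trees of bounded branching -/

def goodW {N : ℕ} (Bad : List (Fin N) → Prop) (w : List (Fin N)) : Prop :=
  ∀ n, ∃ w', Bad w' ∧ w <+: w' ∧ n ≤ w'.length

lemma goodW_bad {N : ℕ} {Bad : List (Fin N) → Prop}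
    (hBT : ∀ w m, Bad w → Bad (w.take m)) {w : List (Fin N)} (hg : goodW Bad w) :
    Bad w := by
  obtain ⟨w', hB, hpre, _⟩ := hg w.length
  have := hBT w' w.length hB
  rwa [← List.prefix_iff_eq_take.mp hpre] at this

lemma goodW_step {N : ℕ} {Bad : List (Fin N) → Prop}
    (hBT : ∀ w m, Bad w → Bad (w.take m)) {w : List (Fin N)} (hg : goodW Bad w) :
    ∃ i, goodW Bad (w ++ [i]) := by
  by_contra hno
  push_neg at hno
  have hno' : ∀ i : Fin N, ∃ n, ∀ w', Bad w' → (w ++ [i]) <+: w' → w'.length < n := by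
    intro i
    have := hno i
    unfold goodW at this
    push_neg at this
    exact this
  choose nf hnf using hno'
  obtain ⟨w', hB, hpre, hlen⟩ := hg ((Finset.univ.sup nf) + w.length + 1)
  obtain ⟨t, rfl⟩ := hpre
  match t with
  | [] => simp at hlen
  | i :: t' =>
    have hp : (w ++ [i]) <+: (w ++ i :: t') := ⟨t', by simp⟩
    have h1 := hnf i (w ++ i :: t') hB hp
    have h2 : nf i ≤ Finset.univ.sup nf := Finset.le_sup (Finset.mem_univ i)
    omega

noncomputable def konigW {N : ℕ} (Bad : List (Fin N) → Prop)
    (hBT : ∀ w m, Bad w → Bad (w.take m)) (hg0 : goodW Bad []) :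
    ℕ → {w : List (Fin N) // goodW Bad w}
  | 0 => ⟨[], hg0⟩
  | (n+1) =>
    ⟨(konigW Bad hBT hg0 n).1 ++ [(goodW_step hBT (konigW Bad hBT hg0 n).2).choose],
      (goodW_step hBT (konigW Bad hBT hg0 n).2).choose_spec⟩

lemma konig_branch {N : ℕ} (Bad : List (Fin N) → Prop)
    (hBT : ∀ w m, Bad w → Bad (w.take m))
    (hlong : ∀ n, ∃ w, Bad w ∧ w.length = n) :
    ∃ b : ℕ → Fin N, ∀ n, Bad (branchPrefix b n) := by
  have hg0 : goodW Bad [] := by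
    intro n
    obtain ⟨w, hB, hlen⟩ := hlong n
    exact ⟨w, hB, List.nil_prefix, by omega⟩
  let W := konigW Bad hBT hg0
  let b : ℕ → Fin N := fun n => (goodW_step hBT (W n).2).choose
  have hW : ∀ n, (W (n+1)).1 = (W n).1 ++ [b n] := fun n => rfl
  have hbp : ∀ n, branchPrefix b n = (W n).1 := by
    intro n
    induction n with
    | zero => simp [branchPrefix, W, konigW]
    | succ n ih => rw [branchPrefix_succ, hW, ih]
  exact ⟨b, fun n => by rw [hbp]; exact goodW_bad hBT (W n).2⟩

/-! #### Ranks -/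

def P (A : ForestAutomaton N Sg Γ Q) (F : LForest N Sg Γ) (ρ : List (Fin N) → Q)
    (l : List (Fin N)) (n : ℕ) : Prop :=
  ∀ w : List (Fin N), w.length = n → l ++ w ∈ F.dom →
    ∃ k, 1 ≤ k ∧ k ≤ n ∧ ρ (l ++ w.take k) ∈ A.final

variable {A : ForestAutomaton N Sg Γ Q} {F : LForest N Sg Γ} {ρ : List (Fin N) → Q}

lemma exists_P (hacc : IsAccepting A F ρ) {l : List (Fin N)} (hl : l ∈ F.dom) :
    ∃ n, P A F ρ l n := by
  by_contra h
  push_neg at h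
  simp only [P, not_forall] at h
  set Bad : List (Fin N) → Prop := fun w =>
    l ++ w ∈ F.dom ∧ ∀ k, 1 ≤ k → k ≤ w.length → ρ (l ++ w.take k) ∉ A.final with hBad
  have hBT : ∀ w m, Bad w → Bad (w.take m) := by
    intro w m ⟨h1, h2⟩
    constructor
    · have : (l ++ w.take m) ++ w.drop m ∈ F.dom := by
        simpa [List.append_assoc] using h1
      exact dom_of_append F _ _ this
    · intro k hk1 hk2
      rw [List.take_take]
      have hkm : k ≤ m := by simp at hk2; omega
      have hkw : k ≤ w.length := by simp at hk2; omega
      rw [min_eq_left hkm]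
      exact h2 k hk1 hkw
  have hlong : ∀ n, ∃ w, Bad w ∧ w.length = n := by
    intro n
    obtain ⟨w, hw⟩ := h n
    push_neg at hw
    obtain ⟨hlen, hdom, hk⟩ := hw
    exact ⟨w, ⟨hdom, fun k hk1 hk2 => hk k hk1 (by omega)⟩, hlen⟩
  obtain ⟨b, hb⟩ := konig_branch Bad hBT hlong
  let b' : ℕ → Fin N := fun n => if h : n < l.length then l[n] else b (n - l.length)
  have hc1 : ∀ n, n ≤ l.length → branchPrefix b' n = l.take n := by
    intro n hn
    induction n with
    | zero => simp [branchPrefix]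
    | succ n ih =>
      rw [branchPrefix_succ, ih (by omega)]
      have hlt : n < l.length := by omega
      have hb' : b' n = l[n] := dif_pos hlt
      rw [hb', List.take_succ, List.getElem?_eq_getElem hlt]
      simp
  have hc2 : ∀ n, branchPrefix b' (l.length + n) = l ++ branchPrefix b n := by
    intro n
    induction n with
    | zero =>
      have := hc1 l.length le_rfl
      simpa [branchPrefix] using this
    | succ n ih =>
      have he : l.length + (n+1) = (l.length + n) + 1 := by omega
      rw [he, branchPrefix_succ, ih, branchPrefix_succ]
      have hb' : b' (l.length + n) = b n := by
        have : ¬ (l.length + n < l.length) := by omega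
        simp only [b', dif_neg this]
        congr 1
        omega
      rw [hb', List.append_assoc]
  have hdom' : ∀ n, branchPrefix b' n ∈ F.dom := by
    intro n
    rcases le_or_gt n l.length with h' | h'
    · rw [hc1 n h']
      exact dom_of_prefix F (List.take_prefix _ _) hl
    · have he : n = l.length + (n - l.length) := by omega
      rw [he, hc2]
      exact (hb _).1
  obtain ⟨m, hm1, hm2⟩ := hacc b' hdom' (l.length + 1)
  have hmeq : m = l.length + (m - l.length) := by omega
  rw [hmeq, hc2] at hm2
  have hbad := hb (m - l.length)
  have hlen := branchPrefix_length b (m - l.length)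
  have hfin := hbad.2 (m - l.length) (by omega) (by omega)
  rw [List.take_of_length_le (by omega)] at hfin
  exact hfin hm2

/-! #### Ranks -/

noncomputable def rank (A : ForestAutomaton N Sg Γ Q) (F : LForest N Sg Γ)
    (ρ : List (Fin N) → Q) (l : List (Fin N)) : ℕ := sInf {n | P A F ρ l n}

lemma rank_spec (hacc : IsAccepting A F ρ) {l : List (Fin N)} (hl : l ∈ F.dom) :
    P A F ρ l (rank A F ρ l) := Nat.sInf_mem (exists_P hacc hl)

lemma rank_le {l : List (Fin N)} {n : ℕ} (h : P A F ρ l n) : rank A F ρ l ≤ n :=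
  Nat.sInf_le h

lemma rank_pos (hacc : IsAccepting A F ρ) {l : List (Fin N)} (hl : l ∈ F.dom) :
    1 ≤ rank A F ρ l := by
  by_contra h
  have h0 : rank A F ρ l = 0 := by omega
  have hs := rank_spec hacc hl
  rw [h0] at hs
  obtain ⟨k, hk1, hk2, _⟩ := hs [] rfl (by simpa using hl)
  omega

lemma rank_child (hacc : IsAccepting A F ρ) {l : List (Fin N)} {i : Fin N}
    (hl : l ∈ F.dom) (hli : l ++ [i] ∈ F.dom) (hf : ρ (l ++ [i]) ∉ A.final) :
    rank A F ρ (l ++ [i]) < rank A F ρ l := by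
  have hpos := rank_pos hacc hl
  have h1 : P A F ρ (l ++ [i]) (rank A F ρ l - 1) := by
    intro w hw hdom
    have hlen : (i :: w).length = rank A F ρ l := by simp [hw]; omega
    have hdom2 : l ++ (i :: w) ∈ F.dom := by
      have he : l ++ (i :: w) = (l ++ [i]) ++ w := by simp
      rw [he]; exact hdom
    obtain ⟨k, hk1, hk2, hkf⟩ := rank_spec hacc hl (i :: w) hlen hdom2
    rcases k with _ | k'
    · omega
    rcases k' with _ | k''
    · simp at hkf
      exact absurd hkf hf
    · refine ⟨k''+1, by omega, by omega, ?_⟩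
      have he : l ++ (i :: w).take (k''+2) = (l ++ [i]) ++ w.take (k''+1) := by
        simp
      rwa [he] at hkf
  have h2 := rank_le h1
  omega

/-! #### The regular forest construction -/

noncomputable def stepF (F : LForest N Sg Γ) (ρ : List (Fin N) → Q)
    (xr : Q → List (Fin N)) (o : Option (List (Fin N))) (i : Fin N) :
    Option (List (Fin N)) :=
  o.bind fun x => if x ++ [i] ∈ F.dom then some (xr (ρ (x ++ [i]))) else none

noncomputable def runF (F : LForest N Sg Γ) (ρ : List (Fin N) → Q)
    (xr : Q → List (Fin N)) (l : List (Fin N)) : Option (List (Fin N)) :=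
  l.foldl (stepF F ρ xr) (some (xr (ρ [])))

variable {xr : Q → List (Fin N)}

lemma stepF_none (i : Fin N) : stepF F ρ xr none i = none := rfl

lemma runF_append (l w : List (Fin N)) :
    runF F ρ xr (l ++ w) = w.foldl (stepF F ρ xr) (runF F ρ xr l) := by
  simp [runF, List.foldl_append]

lemma runF_concat (l : List (Fin N)) (i : Fin N) :
    runF F ρ xr (l ++ [i]) = stepF F ρ xr (runF F ρ xr l) i := by
  rw [runF_append]; rfl

lemma foldl_stepF_none (w : List (Fin N)) :
    w.foldl (stepF F ρ xr) none = none := by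
  induction w with
  | nil => rfl
  | cons i w ih => simpa [stepF] using ih

noncomputable def GF (F : LForest N Sg Γ) (ρ : List (Fin N) → Q)
    (xr : Q → List (Fin N)) : LForest N Sg Γ where
  dom := {l | (runF F ρ xr l).isSome}
  root_mem := by simp [runF]
  prefixClosed := by
    intro l i h
    simp only [Set.mem_setOf_eq, runF_concat] at h ⊢
    cases hc : runF F ρ xr l with
    | none => rw [hc, stepF_none] at h; simp at h
    | some x => simp
  nlabel := fun l => match runF F ρ xr l with
    | some x => F.nlabel x
    | none => F.nlabel []
  elabel := fun l => match l.getLast? with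
    | none => F.elabel []
    | some i => match runF F ρ xr l.dropLast with
      | some x => F.elabel (x ++ [i])
      | none => F.elabel []

noncomputable def mkF (F : LForest N Sg Γ) (ρ : List (Fin N) → Q)
    (xr : Q → List (Fin N)) (x : List (Fin N)) (γ : Γ) : LForest N Sg Γ where
  dom := {w | (w.foldl (stepF F ρ xr) (some x)).isSome}
  root_mem := by simp
  prefixClosed := by
    intro l i h
    simp only [Set.mem_setOf_eq, List.foldl_append] at h ⊢
    cases hc : l.foldl (stepF F ρ xr) (some x) with
    | none => rw [hc] at h; simp [stepF] at h
    | some y => simp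
  nlabel := fun w => match w.foldl (stepF F ρ xr) (some x) with
    | some y => F.nlabel y
    | none => F.nlabel []
  elabel := fun w => match w.getLast? with
    | none => γ
    | some i => match w.dropLast.foldl (stepF F ρ xr) (some x) with
      | some y => F.elabel (y ++ [i])
      | none => F.elabel []

lemma LForest_ext {F G : LForest N Sg Γ} (h1 : F.dom = G.dom)
    (h2 : F.nlabel = G.nlabel) (h3 : F.elabel = G.elabel) : F = G := by
  cases F; cases G
  simp_all

lemma subtree_eq (l x : List (Fin N)) (hx : runF F ρ xr l = some x)
    (hl : l ∈ (GF F ρ xr).dom) :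
    subtreeAt (GF F ρ xr) l hl = mkF F ρ xr x ((GF F ρ xr).elabel l) := by
  apply LForest_ext
  · ext w
    simp only [subtreeAt, mkF, GF, Set.mem_setOf_eq, runF_append, hx]
  · funext w
    simp only [subtreeAt, mkF, GF]
    rw [runF_append, hx]
  · funext w
    induction w using List.reverseRecOn with
    | nil => simp [subtreeAt, mkF]
    | append_singleton w i _ =>
      simp only [subtreeAt, mkF, GF, List.getLast?_concat]
      rw [show l ++ (w ++ [i]) = (l ++ w) ++ [i] by simp, List.getLast?_concat,
        List.dropLast_concat, List.dropLast_concat, runF_append, hx]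

end BRF

/-- If a forest automaton with Büchi acceptance (over finite alphabets and a finite
state space) accepts some forest, then it accepts a regular forest, i.e., one with
finitely many non-isomorphic subtrees. -/
theorem buchi_regular_forest {N : ℕ} {Sg Γ Q : Type}
    [Finite Sg] [Finite Γ] [Finite Q]
    (A : ForestAutomaton N Sg Γ Q)
    (hne : ∃ F : LForest N Sg Γ, Accepts A F) :
    ∃ F : LForest N Sg Γ, Accepts A F ∧ Regular F := by
  obtain ⟨F, ρ, hrun, hacc⟩ := hne
  have hrep : ∀ q : Q, ∃ x : List (Fin N),
      (∃ l ∈ F.dom, ρ l = q) →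
      (x ∈ F.dom ∧ ρ x = q ∧ ∀ l ∈ F.dom, ρ l = q →
        BRF.rank A F ρ x ≤ BRF.rank A F ρ l) := by
    intro q
    by_cases h : ∃ l ∈ F.dom, ρ l = q
    · obtain ⟨l0, hl0, hq0⟩ := h
      have hSne : {n | ∃ l ∈ F.dom, ρ l = q ∧ BRF.rank A F ρ l = n}.Nonempty :=
        ⟨_, l0, hl0, hq0, rfl⟩
      obtain ⟨x, hx1, hx2, hx3⟩ := Nat.sInf_mem hSne
      refine ⟨x, fun _ => ⟨hx1, hx2, fun l' h1 h2 => ?_⟩⟩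
      rw [hx3]
      exact Nat.sInf_le ⟨l', h1, h2, rfl⟩
    · exact ⟨[], fun hq => absurd hq h⟩
  choose xr hxr using hrep
  have hinv : ∀ l x, BRF.runF F ρ xr l = some x → x ∈ F.dom ∧ ∃ q, x = xr q := by
    intro l
    induction l using List.reverseRecOn with
    | nil =>
      intro x hx
      have hx' : x = xr (ρ []) := by
        have : some (xr (ρ [])) = some x := hx
        exact (Option.some_injective _ this).symm
      have hp := hxr (ρ []) ⟨[], F.root_mem, rfl⟩
      exact hx' ▸ ⟨hp.1, ⟨ρ [], rfl⟩⟩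
    | append_singleton l i ih =>
      intro x hx
      rw [BRF.runF_concat] at hx
      cases hc : BRF.runF F ρ xr l with
      | none => rw [hc] at hx; simp [BRF.stepF] at hx
      | some y =>
        rw [hc] at hx
        simp only [BRF.stepF, Option.bind_some] at hx
        split_ifs at hx with hd
        · have hx' : x = xr (ρ (y ++ [i])) := (Option.some_injective _ hx).symm
          have hp := hxr (ρ (y ++ [i])) ⟨y ++ [i], hd, rfl⟩
          exact hx' ▸ ⟨hp.1, ⟨_, rfl⟩⟩
  classical
  let ρG : List (Fin N) → Q := fun l => match BRF.runF F ρ xr l with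
    | some x => ρ x
    | none => ρ []
  have hρG : ∀ l x, BRF.runF F ρ xr l = some x → ρG l = ρ x := by
    intro l x hx; simp [ρG, hx]
  refine ⟨BRF.GF F ρ xr, ⟨ρG, ⟨?_, ?_⟩, ?_⟩, ?_⟩
  · have h0 : BRF.runF F ρ xr [] = some (xr (ρ [])) := rfl
    rw [hρG [] _ h0, (hxr (ρ []) ⟨[], F.root_mem, rfl⟩).2.1]
    exact hrun.1
  · intro l hl
    have hsome : (BRF.runF F ρ xr l).isSome := hl
    obtain ⟨x, hx⟩ := Option.isSome_iff_exists.mp hsome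
    have hxd := (hinv l x hx).1
    have hnl : (BRF.GF F ρ xr).nlabel l = F.nlabel x := by
      simp [BRF.GF, hx]
    have hfun : (fun i => if l ++ [i] ∈ (BRF.GF F ρ xr).dom then
          some ((BRF.GF F ρ xr).elabel (l ++ [i]), ρG (l ++ [i])) else none)
        = (fun i => if x ++ [i] ∈ F.dom then
          some (F.elabel (x ++ [i]), ρ (x ++ [i])) else none) := by
      funext i
      have hstep : BRF.runF F ρ xr (l ++ [i])
          = if x ++ [i] ∈ F.dom then some (xr (ρ (x ++ [i]))) else none := by
        rw [BRF.runF_concat, hx]; rfl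
      by_cases hd : x ++ [i] ∈ F.dom
      · rw [if_pos hd] at hstep
        have hmem : l ++ [i] ∈ (BRF.GF F ρ xr).dom := by
          show (BRF.runF F ρ xr (l ++ [i])).isSome
          rw [hstep]; rfl
        rw [if_pos hmem, if_pos hd]
        have hel : (BRF.GF F ρ xr).elabel (l ++ [i]) = F.elabel (x ++ [i]) := by
          simp [BRF.GF, List.getLast?_concat, List.dropLast_concat, hx]
        have hst : ρG (l ++ [i]) = ρ (x ++ [i]) := by
          rw [hρG _ _ hstep, (hxr (ρ (x ++ [i])) ⟨x ++ [i], hd, rfl⟩).2.1]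
        rw [hel, hst]
      · rw [if_neg hd] at hstep
        have hmem : l ++ [i] ∉ (BRF.GF F ρ xr).dom := by
          show ¬ (BRF.runF F ρ xr (l ++ [i])).isSome
          rw [hstep]; simp
        rw [if_neg hmem, if_neg hd]
    rw [hρG l x hx, hnl, hfun]
    exact hrun.2 x hxd
  · intro b hb n
    by_contra hcon
    push_neg at hcon
    have hxm : ∀ m, ∃ x, BRF.runF F ρ xr (branchPrefix b m) = some x :=
      fun m => Option.isSome_iff_exists.mp (hb m)
    choose x hxs using hxm
    have key : ∀ m, n ≤ m → BRF.rank A F ρ (x (m+1)) < BRF.rank A F ρ (x m) := by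
      intro m hm
      have hstep : BRF.runF F ρ xr (branchPrefix b (m+1))
          = BRF.stepF F ρ xr (some (x m)) (b m) := by
        rw [BRF.branchPrefix_succ, BRF.runF_concat, hxs m]
      rw [hxs (m+1)] at hstep
      simp only [BRF.stepF, Option.bind_some] at hstep
      split_ifs at hstep with hd
      · have hxe : x (m+1) = xr (ρ (x m ++ [b m])) := Option.some_injective _ hstep
        have hprop := hxr (ρ (x m ++ [b m])) ⟨_, hd, rfl⟩
        have hnotf : ρ (x m ++ [b m]) ∉ A.final := by
          intro hf
          apply hcon (m+1) (by omega)
          rw [hρG _ _ (hxs (m+1)), hxe, hprop.2.1]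
          exact hf
        have h1 : BRF.rank A F ρ (x m ++ [b m]) < BRF.rank A F ρ (x m) :=
          BRF.rank_child hacc (hinv _ _ (hxs m)).1 hd hnotf
        have h2 : BRF.rank A F ρ (x (m+1)) ≤ BRF.rank A F ρ (x m ++ [b m]) := by
          rw [hxe]; exact hprop.2.2 _ hd rfl
        omega
    have hdesc : ∀ k, BRF.rank A F ρ (x (n+k)) + k ≤ BRF.rank A F ρ (x n) := by
      intro k
      induction k with
      | zero => simp
      | succ k ih =>
        have hk := key (n+k) (by omega)
        have he : n + (k+1) = (n+k)+1 := by omega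
        rw [he]
        omega
    have := hdesc (BRF.rank A F ρ (x n) + 1)
    omega
  · have hsub : {S : LForest N Sg Γ | ∃ (l : List (Fin N))
        (hl : l ∈ (BRF.GF F ρ xr).dom), S = subtreeAt (BRF.GF F ρ xr) l hl}
        ⊆ (fun p : List (Fin N) × Γ => BRF.mkF F ρ xr p.1 p.2) ''
          ((Set.range xr) ×ˢ (Set.univ : Set Γ)) := by
      rintro S ⟨l, hl, rfl⟩
      have hsome : (BRF.runF F ρ xr l).isSome := hl
      obtain ⟨xx, hxx⟩ := Option.isSome_iff_exists.mp hsome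
      obtain ⟨-, q, hq⟩ := hinv l xx hxx
      exact ⟨(xx, (BRF.GF F ρ xr).elabel l), ⟨⟨q, hq.symm⟩, trivial⟩,
        (BRF.subtree_eq l xx hxx hl).symm⟩
    exact Set.Finite.subset (((Set.finite_range xr).prod Set.finite_univ).image _) hsub
end
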